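/- Let X be a countable set, γ a binary relation on X, L ⊆ ℕ a set whose unary language {a^n : n ∈ L} is regular, and φ : L → X a surjection such that {(m,n) ∈ L×L : φ m = φ n} and {(m,n) ∈ L×L : γ (φ m) (φ n)} are regular relations (so (L, φ) is a unary FA-presentation of (X, γ)). Let Q be an equivalence relation on X such that {(m,n) ∈ L×L : Q (φ m) (φ n)} is a regular relation. Then the quotient structure (X/Q, γ_Q), where γ_Q relates the class of x to the class of y if and only if there exist x' with Q x x' and y' with Q y y' such that γ x' y', is unary FA-presentable. -/

import Mathlib

/-- The convolution word of the pair `(m, n)`, over the three-letter alphabet `Fin 3`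
(`0` plays the role of `s`, `1` of `l`, `2` of `r`). -/
def convWord (m n : ℕ) : List (Fin 3) :=
  List.replicate (min m n) 0 ++ List.replicate (m - min m n) 1 ++
    List.replicate (n - min m n) 2

/-- The convolution language of a binary relation on `ℕ`. -/
def convLang (R : ℕ → ℕ → Prop) : Language (Fin 3) :=
  {w | ∃ m n, R m n ∧ w = convWord m n}

/-- A binary relation on `ℕ` is regular if its convolution language is regular. -/
def RegularRel (R : ℕ → ℕ → Prop) : Prop :=
  (convLang R).IsRegular
/-- The unary language over a one-letter alphabet associated to a set `L ⊆ ℕ`,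
identifying `a^n` with `n`. -/
def unaryLang (L : Set ℕ) : Language Unit :=
  {w | w.length ∈ L}

/-- A (countable) structure `(X, ρ)` with one binary relation is unary FA-presentable
if there are a set `L ⊆ ℕ` whose unary language is regular and a surjection
`φ : L → X` such that equality and the relation, pulled back along `φ`, are
regular relations. -/
def UnaryFAPresentable {X : Type*} (ρ : X → X → Prop) : Prop :=
  ∃ L : Set ℕ, (unaryLang L).IsRegular ∧
    ∃ φ : ℕ → X, (∀ x, ∃ n ∈ L, φ n = x) ∧
      RegularRel (fun m n => m ∈ L ∧ n ∈ L ∧ φ m = φ n) ∧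
      RegularRel (fun m n => m ∈ L ∧ n ∈ L ∧ ρ (φ m) (φ n))

lemma exists_iterate_period {σ : Type*} [Fintype σ] (f : σ → σ) :
    ∃ N p, 0 < p ∧ ∀ n, N ≤ n → f^[n + p] = f^[n] := by
  obtain ⟨i, j, hne, hij⟩ := Finite.exists_ne_map_eq_of_infinite (fun n : ℕ => f^[n])
  rcases Nat.lt_or_ge i j with hlt | hge
  · refine ⟨i, j - i, by omega, fun n hn => ?_⟩
    obtain ⟨t, rfl⟩ : ∃ t, n = t + i := ⟨n - i, by omega⟩
    have h1 : t + i + (j - i) = t + j := by omega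
    rw [h1, Function.iterate_add f t j, Function.iterate_add f t i, hij]
  · have hlt : j < i := by omega
    refine ⟨j, i - j, by omega, fun n hn => ?_⟩
    obtain ⟨t, rfl⟩ : ∃ t, n = t + j := ⟨n - j, by omega⟩
    have h1 : t + j + (i - j) = t + i := by omega
    rw [h1, Function.iterate_add f t j, Function.iterate_add f t i, hij]

lemma RegularRel.congr' {R R' : ℕ → ℕ → Prop} (h : ∀ m n, R m n ↔ R' m n)
    (hr : RegularRel R) : RegularRel R' := by
  have : R = R' := by funext m n; exact propext (h m n)
  rwa [this] at hr

lemma convWord_inj {m n m' n' : ℕ} (h : convWord m n = convWord m' n') :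
    m = m' ∧ n = n' := by
  have c0 := congrArg (List.count (0 : Fin 3)) h
  have c1 := congrArg (List.count (1 : Fin 3)) h
  have c2 := congrArg (List.count (2 : Fin 3)) h
  simp [convWord, List.count_append, List.count_replicate] at c0 c1 c2
  omega

def Good (R : ℕ → ℕ → Prop) (p N : ℕ) : Prop :=
  (∀ m n, N ≤ min m n → (R m n ↔ R (m + p) (n + p))) ∧
  (∀ m n, n + N ≤ m → (R m n ↔ R (m + p) n)) ∧
  (∀ m n, m + N ≤ n → (R m n ↔ R m (n + p)))

lemma Good.mono {R : ℕ → ℕ → Prop} {p N N' : ℕ} (h : Good R p N) (hN : N ≤ N') :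
    Good R p N' :=
  ⟨fun m n hm => h.1 m n (by omega), fun m n hm => h.2.1 m n (by omega),
   fun m n hm => h.2.2 m n (by omega)⟩

lemma Good.add {R : ℕ → ℕ → Prop} {p q N : ℕ} (h : Good R p N) (h' : Good R q N) :
    Good R (p + q) N := by
  refine ⟨fun m n hm => ?_, fun m n hm => ?_, fun m n hm => ?_⟩
  · rw [h.1 m n hm, h'.1 (m+p) (n+p) (by omega), show m+p+q = m+(p+q) by omega,
      show n+p+q = n+(p+q) by omega]
  · rw [h.2.1 m n hm, h'.2.1 (m+p) n (by omega), show m+p+q = m+(p+q) by omega]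
  · rw [h.2.2 m n hm, h'.2.2 m (n+p) (by omega), show n+p+q = n+(p+q) by omega]

lemma Good.mul {R : ℕ → ℕ → Prop} {p N : ℕ} (h : Good R p N) (k : ℕ) (hk : 0 < k) :
    Good R (k * p) N := by
  induction k with
  | zero => omega
  | succ k ih =>
    rcases Nat.eq_zero_or_pos k with rfl | hk'
    · simpa using h
    · have := (ih hk').add h
      rwa [show k * p + p = (k+1) * p by ring] at this

-- evaluation of a replicate block
lemma evalFrom_replicate {σ : Type*} (M : DFA (Fin 3) σ) (s : σ) (c : Fin 3) (k : ℕ) :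
    M.evalFrom s (List.replicate k c) = (fun t => M.step t c)^[k] s := by
  induction k generalizing s with
  | zero => rfl
  | succ k ih =>
    rw [List.replicate_succ]
    show M.evalFrom (M.step s c) (List.replicate k c) = _
    rw [ih, Function.iterate_succ_apply]

lemma regular_good {R : ℕ → ℕ → Prop} (h : RegularRel R) : ∃ p N, 0 < p ∧ Good R p N := by
  obtain ⟨σ, _, M, hM⟩ := h
  -- membership characterisation
  have hmem : ∀ m n, R m n ↔ convWord m n ∈ M.accepts := by
    intro m n
    rw [hM]
    constructor
    · exact fun h => ⟨m, n, h, rfl⟩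
    · rintro ⟨m', n', h', he⟩
      obtain ⟨rfl, rfl⟩ := convWord_inj he
      exact h'
  obtain ⟨N0, p0, hp0, H0⟩ := exists_iterate_period (fun t => M.step t 0)
  obtain ⟨N1, p1, hp1, H1⟩ := exists_iterate_period (fun t => M.step t 1)
  obtain ⟨N2, p2, hp2, H2⟩ := exists_iterate_period (fun t => M.step t 2)
  -- extend periods to multiples
  have key : ∀ (f : σ → σ) (N' p' : ℕ), (∀ n, N' ≤ n → f^[n + p'] = f^[n]) →
      ∀ k n, N' ≤ n → f^[n + k * p'] = f^[n] := by
    intro f N' p' hf k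
    induction k with
    | zero => simp
    | succ k ih =>
      intro n hn
      rw [show n + (k+1) * p' = (n + k * p') + p' by ring, hf _ (by omega), ih n hn]
  set p := p0 * p1 * p2 with hp
  have hppos : 0 < p := by positivity
  set N := max N0 (max N1 N2) with hN
  have P0 : ∀ n, N ≤ n → (fun t => M.step t 0)^[n + p] = (fun t => M.step t 0)^[n] := by
    intro n hn
    have := key _ _ _ H0 (p1 * p2) n (by omega)
    rwa [show n + p1 * p2 * p0 = n + p by ring] at this
  have P1 : ∀ n, N ≤ n → (fun t => M.step t 1)^[n + p] = (fun t => M.step t 1)^[n] := by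
    intro n hn
    have := key _ _ _ H1 (p0 * p2) n (by omega)
    rwa [show n + p0 * p2 * p1 = n + p by ring] at this
  have P2 : ∀ n, N ≤ n → (fun t => M.step t 2)^[n + p] = (fun t => M.step t 2)^[n] := by
    intro n hn
    have := key _ _ _ H2 (p0 * p1) n (by omega)
    rwa [show n + p0 * p1 * p2 = n + p by ring] at this
  have heval : ∀ m n, M.eval (convWord m n) =
      (fun t => M.step t 2)^[n - min m n]
        ((fun t => M.step t 1)^[m - min m n]
          ((fun t => M.step t 0)^[min m n] M.start)) := by
    intro m n
    rw [convWord, DFA.eval, DFA.evalFrom_of_append, DFA.evalFrom_of_append,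
      evalFrom_replicate, evalFrom_replicate, evalFrom_replicate]
  refine ⟨p, N, hppos, ?_, ?_, ?_⟩
  · intro m n hmn
    rw [hmem, hmem, DFA.mem_accepts, DFA.mem_accepts, heval, heval]
    have h1 : min (m + p) (n + p) = min m n + p := by omega
    have h2 : m + p - (min m n + p) = m - min m n := by omega
    have h3 : n + p - (min m n + p) = n - min m n := by omega
    rw [h1, h2, h3, P0 _ hmn]
  · intro m n hmn
    rw [hmem, hmem, DFA.mem_accepts, DFA.mem_accepts, heval, heval]
    have h1 : min (m + p) n = min m n := by omega
    have h2 : m + p - min m n = (m - min m n) + p := by omega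
    rw [h1, h2, P1 _ (by omega)]
  · intro m n hmn
    rw [hmem, hmem, DFA.mem_accepts, DFA.mem_accepts, heval, heval]
    have h1 : min m (n + p) = min m n := by omega
    have h3 : n + p - min m n = (n - min m n) + p := by omega
    rw [h1, h3, P2 _ (by omega)]

lemma Good.comp {A B : ℕ → ℕ → Prop} {p N : ℕ}
    (hA : Good A p N) (hB : Good B p N) :
    Good (fun m n => ∃ k, A m k ∧ B k n) p (2*N + 2*p + 2) := by
  obtain ⟨A1, A2, A3⟩ := hA
  obtain ⟨B1, B2, B3⟩ := hB
  refine ⟨fun m n hmn => ⟨?_, ?_⟩, fun m n hmn => ⟨?_, ?_⟩, fun m n hmn => ⟨?_, ?_⟩⟩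
  · rintro ⟨k, ha, hb⟩
    by_cases hk : N ≤ k
    · exact ⟨k + p, (A1 m k (by omega)).mp ha, (B1 k n (by omega)).mp hb⟩
    · exact ⟨k, (A2 m k (by omega)).mp ha, (B3 k n (by omega)).mp hb⟩
  · rintro ⟨k, ha, hb⟩
    by_cases hk : N + p ≤ k
    · obtain ⟨k', rfl⟩ : ∃ k', k = k' + p := ⟨k - p, by omega⟩
      exact ⟨k', (A1 m k' (by omega)).mpr ha, (B1 k' n (by omega)).mpr hb⟩
    · exact ⟨k, (A2 m k (by omega)).mpr ha, (B3 k n (by omega)).mpr hb⟩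
  · rintro ⟨k, ha, hb⟩
    by_cases hk : k ≤ n + N + p
    · exact ⟨k, (A2 m k (by omega)).mp ha, hb⟩
    · exact ⟨k + p, (A1 m k (by omega)).mp ha, (B2 k n (by omega)).mp hb⟩
  · rintro ⟨k, ha, hb⟩
    by_cases hk : k ≤ n + N + p
    · exact ⟨k, (A2 m k (by omega)).mpr ha, hb⟩
    · obtain ⟨k', rfl⟩ : ∃ k', k = k' + p := ⟨k - p, by omega⟩
      exact ⟨k', (A1 m k' (by omega)).mpr ha, (B2 k' n (by omega)).mpr hb⟩
  · rintro ⟨k, ha, hb⟩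
    by_cases hk : k ≤ m + N + p
    · exact ⟨k, ha, (B3 k n (by omega)).mp hb⟩
    · exact ⟨k + p, (A3 m k (by omega)).mp ha, (B1 k n (by omega)).mp hb⟩
  · rintro ⟨k, ha, hb⟩
    by_cases hk : k ≤ m + N + p
    · exact ⟨k, ha, (B3 k n (by omega)).mpr hb⟩
    · obtain ⟨k', rfl⟩ : ∃ k', k = k' + p := ⟨k - p, by omega⟩
      exact ⟨k', (A3 m k' (by omega)).mpr ha, (B1 k' n (by omega)).mpr hb⟩

def cls (p N a : ℕ) : ℕ := if a < N + p then a else N + (a - N) % p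

lemma cls_lt {p N : ℕ} (hp : 0 < p) (a : ℕ) : cls p N a < N + p := by
  unfold cls; split
  · omega
  · have := Nat.mod_lt (a - N) hp; omega

lemma cls_spec (p N a : ℕ) : ∃ t, a = cls p N a + t * p ∧ (t = 0 ∨ N ≤ cls p N a) := by
  unfold cls; split
  · exact ⟨0, by omega, Or.inl rfl⟩
  · refine ⟨(a - N) / p, ?_, Or.inr (by omega)⟩
    have := Nat.mod_add_div' (a - N) p
    omega

lemma cls_succ {p N : ℕ} (hp : 0 < p) (a : ℕ) :
    cls p N (a + 1) = if cls p N a + 1 < N + p then cls p N a + 1 else N := by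
  unfold cls
  by_cases h : a < N + p
  · by_cases h1 : a + 1 < N + p
    · rw [if_pos h1, if_pos h, if_pos (by omega)]
    · have ha : a + 1 = N + p := by omega
      rw [if_neg h1, if_pos h, if_neg (by omega)]
      have : a + 1 - N = p := by omega
      rw [this, Nat.mod_self]
      omega
  · have hx : (a + 1 - N) % p = ((a - N) % p + 1) % p := by
      conv_lhs => rw [show a + 1 - N = ((a - N) % p + 1) + p * ((a - N) / p) by
        have := Nat.mod_add_div (a - N) p; omega]
      rw [Nat.add_mul_mod_self_left]
    have hr := Nat.mod_lt (a - N) hp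
    rw [if_neg (by omega), if_neg h, hx]
    by_cases h2 : (a - N) % p + 1 < p
    · rw [Nat.mod_eq_of_lt h2, if_pos (by omega)]
      omega
    · have : (a - N) % p + 1 = p := by omega
      rw [this, Nat.mod_self, if_neg (by omega)]
      omega


section Invariance

variable {p N : ℕ} {S : ℕ → ℕ → Prop}

lemma shift_min (hS : Good S p N) (m n t : ℕ) (h : N ≤ min m n) :
    S (m + t * p) (n + t * p) ↔ S m n := by
  induction t with
  | zero => simp
  | succ t ih =>
    rw [show m + (t+1) * p = (m + t * p) + p by ring, show n + (t+1) * p = (n + t * p) + p by ring]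
    rw [← hS.1 (m + t * p) (n + t * p) (by omega)]
    exact ih

lemma shift_d1 (hS : Good S p N) (m n t : ℕ) (h : n + N ≤ m) :
    S (m + t * p) n ↔ S m n := by
  induction t with
  | zero => simp
  | succ t ih =>
    rw [show m + (t+1) * p = (m + t * p) + p by ring]
    rw [← hS.2.1 (m + t * p) n (by omega)]
    exact ih

lemma shift_d2 (hS : Good S p N) (m n t : ℕ) (h : m + N ≤ n) :
    S m (n + t * p) ↔ S m n := by
  induction t with
  | zero => simp
  | succ t ih =>
    rw [show n + (t+1) * p = (n + t * p) + p by ring]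
    rw [← hS.2.2 m (n + t * p) (by omega)]
    exact ih

lemma red1 (hS : Good S p N) (a d : ℕ) :
    S (a + d) a ↔ S (cls p N a + cls p N d) (cls p N a) := by
  have step1 : S (a + d) a ↔ S (cls p N a + d) (cls p N a) := by
    obtain ⟨t, ht, hc⟩ := cls_spec p N a
    set c := cls p N a with hcdef
    rcases hc with rfl | hc
    · rw [show c = a from by omega]
    · rw [show a + d = (c + d) + t * p by omega, show a = c + t * p from ht]
      exact shift_min hS (c + d) c t (by omega)
  have step2 : S (cls p N a + d) (cls p N a) ↔ S (cls p N a + cls p N d) (cls p N a) := by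
    obtain ⟨s, hs, hc⟩ := cls_spec p N d
    set c := cls p N a with hcdef
    set e := cls p N d with hedef
    rcases hc with rfl | hc
    · rw [show e = d from by omega]
    · rw [show c + d = (c + e) + s * p by omega]
      exact shift_d1 hS (c + e) c s (by omega)
  rw [step1, step2]

lemma red2 (hS : Good S p N) (a d : ℕ) :
    S a (a + d) ↔ S (cls p N a) (cls p N a + cls p N d) := by
  have step1 : S a (a + d) ↔ S (cls p N a) (cls p N a + d) := by
    obtain ⟨t, ht, hc⟩ := cls_spec p N a
    set c := cls p N a with hcdef
    rcases hc with rfl | hc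
    · rw [show c = a from by omega]
    · rw [show a + d = (c + d) + t * p by omega, show a = c + t * p from ht]
      exact shift_min hS c (c + d) t (by omega)
  have step2 : S (cls p N a) (cls p N a + d) ↔ S (cls p N a) (cls p N a + cls p N d) := by
    obtain ⟨s, hs, hc⟩ := cls_spec p N d
    set c := cls p N a with hcdef
    set e := cls p N d with hedef
    rcases hc with rfl | hc
    · rw [show e = d from by omega]
    · rw [show c + d = (c + e) + s * p by omega]
      exact shift_d2 hS c (c + e) s (by omega)
  rw [step1, step2]

end Invariance

section GDFA

def zstepF (p N : ℕ) (hp : 0 < p) (z : Fin (N + p)) : Fin (N + p) :=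
  if h : (z : ℕ) + 1 < N + p then ⟨(z : ℕ) + 1, h⟩ else ⟨N, by omega⟩

def clsF (p N : ℕ) (hp : 0 < p) (a : ℕ) : Fin (N + p) := ⟨cls p N a, cls_lt hp a⟩

def gDFA (p N : ℕ) (hp : 0 < p) (S : ℕ → ℕ → Prop) :
    DFA (Fin 3) (Option (Fin (N + p) × Option (Bool × Fin (N + p)))) where
  step := fun s c =>
    match s with
    | none => none
    | some (z, none) =>
      if c = 0 then some (zstepF p N hp z, none)
      else if c = 1 then some (z, some (false, clsF p N hp 1))
      else some (z, some (true, clsF p N hp 1))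
    | some (z, some (fl, o)) =>
      if c = 1 then (if fl = false then some (z, some (false, zstepF p N hp o)) else none)
      else if c = 2 then (if fl = true then some (z, some (true, zstepF p N hp o)) else none)
      else none
  start := some (clsF p N hp 0, none)
  accept := {s | match s with
    | none => False
    | some (z, none) => S z z
    | some (z, some (false, o)) => S ((z : ℕ) + (o : ℕ)) z
    | some (z, some (true, o)) => S z ((z : ℕ) + (o : ℕ))}

variable {p N : ℕ} (hp : 0 < p) (S : ℕ → ℕ → Prop)

lemma zstepF_clsF (b : ℕ) : zstepF p N hp (clsF p N hp b) = clsF p N hp (b + 1) := by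
  apply Fin.ext
  by_cases h : cls p N b + 1 < N + p <;>
    simp [zstepF, clsF, cls_succ hp, h]

lemma geval0 (a : ℕ) :
    (gDFA p N hp S).eval (List.replicate a 0) = some (clsF p N hp a, none) := by
  induction a with
  | zero => rfl
  | succ a ih =>
    rw [List.replicate_succ', DFA.eval_append_singleton, ih]
    simp [gDFA, zstepF_clsF hp]

lemma geval1 (a b : ℕ) (hb : 1 ≤ b) :
    (gDFA p N hp S).eval (List.replicate a 0 ++ List.replicate b 1) =
      some (clsF p N hp a, some (false, clsF p N hp b)) := by
  induction b with
  | zero => omega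
  | succ b ih =>
    rcases Nat.eq_zero_or_pos b with rfl | hb'
    · rw [show List.replicate 1 (1 : Fin 3) = [1] from rfl, DFA.eval_append_singleton,
        geval0 hp S]
      simp [gDFA]
    · rw [List.replicate_succ', ← List.append_assoc, DFA.eval_append_singleton, ih hb']
      simp [gDFA, zstepF_clsF hp]

lemma geval2 (a c : ℕ) (hc : 1 ≤ c) :
    (gDFA p N hp S).eval (List.replicate a 0 ++ List.replicate c 2) =
      some (clsF p N hp a, some (true, clsF p N hp c)) := by
  induction c with
  | zero => omega
  | succ c ih =>
    rcases Nat.eq_zero_or_pos c with rfl | hc'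
    · rw [show List.replicate 1 (2 : Fin 3) = [2] from rfl, DFA.eval_append_singleton,
        geval0 hp S]
      simp [gDFA]
    · rw [List.replicate_succ', ← List.append_assoc, DFA.eval_append_singleton, ih hc']
      simp [gDFA, zstepF_clsF hp]

lemma gshape (w : List (Fin 3)) :
    (∃ a, w = List.replicate a 0) ∨
    (∃ a b, 1 ≤ b ∧ w = List.replicate a 0 ++ List.replicate b 1) ∨
    (∃ a c, 1 ≤ c ∧ w = List.replicate a 0 ++ List.replicate c 2) ∨
    (gDFA p N hp S).eval w = none := by
  induction w using List.reverseRecOn with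
  | nil => exact Or.inl ⟨0, rfl⟩
  | append_singleton u x ih =>
    rcases ih with ⟨a, rfl⟩ | ⟨a, b, hb, rfl⟩ | ⟨a, c, hc, rfl⟩ | hdead
    · fin_cases x
      · exact Or.inl ⟨a + 1, by rw [List.replicate_succ']; rfl⟩
      · exact Or.inr (Or.inl ⟨a, 1, le_refl 1, rfl⟩)
      · exact Or.inr (Or.inr (Or.inl ⟨a, 1, le_refl 1, rfl⟩))
    · fin_cases x
      · refine Or.inr (Or.inr (Or.inr ?_))
        rw [DFA.eval_append_singleton, geval1 hp S a b hb]
        simp [gDFA]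
      · refine Or.inr (Or.inl ⟨a, b + 1, by omega, ?_⟩)
        rw [List.replicate_succ' (n := b) (a := (1 : Fin 3)), ← List.append_assoc]; rfl
      · refine Or.inr (Or.inr (Or.inr ?_))
        rw [DFA.eval_append_singleton, geval1 hp S a b hb]
        simp [gDFA]
    · fin_cases x
      · refine Or.inr (Or.inr (Or.inr ?_))
        rw [DFA.eval_append_singleton, geval2 hp S a c hc]
        simp [gDFA]
      · refine Or.inr (Or.inr (Or.inr ?_))
        rw [DFA.eval_append_singleton, geval2 hp S a c hc]
        simp [gDFA]
      · refine Or.inr (Or.inr (Or.inl ⟨a, c + 1, by omega, ?_⟩))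
        rw [List.replicate_succ' (n := c) (a := (2 : Fin 3)), ← List.append_assoc]; rfl
    · refine Or.inr (Or.inr (Or.inr ?_))
      rw [DFA.eval_append_singleton, hdead]
      simp [gDFA]

end GDFA

lemma cls_zero {p N : ℕ} (hp : 0 < p) : cls p N 0 = 0 := by
  unfold cls; rw [if_pos (by omega)]

lemma good_regular {S : ℕ → ℕ → Prop} {p N : ℕ} (hp : 0 < p) (hS : Good S p N) :
    RegularRel S := by
  refine ⟨Option (Fin (N + p) × Option (Bool × Fin (N + p))), inferInstance,
    gDFA p N hp S, ?_⟩
  ext w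
  rw [DFA.mem_accepts]
  constructor
  · intro hacc
    rcases gshape hp S w with ⟨a, rfl⟩ | ⟨a, b, hb, rfl⟩ | ⟨a, c, hc, rfl⟩ | hdead
    · rw [geval0 hp S] at hacc
      have h1 : S (cls p N a) (cls p N a) := hacc
      have h2 : S a a := by
        have := (red1 hS a 0).mpr (by rw [cls_zero hp, Nat.add_zero]; exact h1)
        simpa using this
      exact ⟨a, a, h2, by simp [convWord]⟩
    · rw [geval1 hp S a b hb] at hacc
      have h1 : S (cls p N a + cls p N b) (cls p N a) := hacc
      have h2 : S (a + b) a := (red1 hS a b).mpr h1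
      refine ⟨a + b, a, h2, ?_⟩
      simp [convWord, show min (a + b) a = a from by omega, show a + b - a = b from by omega]
    · rw [geval2 hp S a c hc] at hacc
      have h1 : S (cls p N a) (cls p N a + cls p N c) := hacc
      have h2 : S a (a + c) := (red2 hS a c).mpr h1
      refine ⟨a, a + c, h2, ?_⟩
      simp [convWord, show min a (a + c) = a from by omega, show a + c - a = c from by omega]
    · rw [hdead] at hacc
      simp [gDFA] at hacc
  · rintro ⟨m, n, hmn, rfl⟩
    rcases le_or_gt n m with h | h
    · have hw : convWord m n = List.replicate n 0 ++ List.replicate (m - n) 1 := by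
        simp [convWord, show min m n = n from by omega]
      rcases Nat.eq_zero_or_pos (m - n) with h0 | h0
      · have hmn' : m = n := by omega
        subst hmn'
        rw [hw, h0]
        simp only [List.replicate_zero, List.append_nil]
        rw [geval0 hp S]
        show S (cls p N m) (cls p N m)
        have := (red1 hS m 0).mp (by simpa using hmn)
        rwa [cls_zero hp, Nat.add_zero] at this
      · rw [hw, geval1 hp S n (m - n) h0]
        show S (cls p N n + cls p N (m - n)) (cls p N n)
        exact (red1 hS n (m - n)).mp (by rw [show n + (m - n) = m from by omega]; exact hmn)
    · have hw : convWord m n = List.replicate m 0 ++ List.replicate (n - m) 2 := by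
        simp [convWord, show min m n = m from by omega]
      rw [hw, geval2 hp S m (n - m) (by omega)]
      show S (cls p N m) (cls p N m + cls p N (n - m))
      exact (red2 hS m (n - m)).mp (by rw [show m + (n - m) = n from by omega]; exact hmn)

lemma RegularRel.comp {A B : ℕ → ℕ → Prop} (hA : RegularRel A) (hB : RegularRel B) :
    RegularRel (fun m n => ∃ k, A m k ∧ B k n) := by
  obtain ⟨pA, NA, hpA, hGA⟩ := regular_good hA
  obtain ⟨pB, NB, hpB, hGB⟩ := regular_good hB
  have hGA' : Good A (pB * pA) (max NA NB) := (hGA.mul pB hpB).mono (le_max_left _ _)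
  have hGB' : Good B (pA * pB) (max NA NB) := (hGB.mul pA hpA).mono (le_max_right _ _)
  rw [mul_comm] at hGB'
  exact good_regular (by positivity) (hGA'.comp hGB')

theorem stmt6 {X : Type*} [Countable X] (γ : X → X → Prop)
    (L : Set ℕ) (hL : (unaryLang L).IsRegular)
    (φ : ℕ → X) (hsurj : ∀ x, ∃ n ∈ L, φ n = x)
    (heq : RegularRel (fun m n => m ∈ L ∧ n ∈ L ∧ φ m = φ n))
    (hγ : RegularRel (fun m n => m ∈ L ∧ n ∈ L ∧ γ (φ m) (φ n)))
    (Q : X → X → Prop) (hQ : Equivalence Q)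
    (hQreg : RegularRel (fun m n => m ∈ L ∧ n ∈ L ∧ Q (φ m) (φ n))) :
    UnaryFAPresentable (fun a b : Quotient (⟨Q, hQ⟩ : Setoid X) =>
      ∃ x y : X, Quotient.mk (⟨Q, hQ⟩ : Setoid X) x = a ∧
        Quotient.mk (⟨Q, hQ⟩ : Setoid X) y = b ∧
        ∃ x' y' : X, Q x x' ∧ Q y y' ∧ γ x' y') := by
  set st : Setoid X := ⟨Q, hQ⟩ with hst
  refine ⟨L, hL, fun n => Quotient.mk st (φ n), ?_, ?_, ?_⟩
  · intro x
    obtain ⟨y, hy⟩ := Quotient.exists_rep x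
    obtain ⟨n, hn, hφ⟩ := hsurj y
    exact ⟨n, hn, by show Quotient.mk st (φ n) = x; rw [hφ]; exact hy⟩
  · refine RegularRel.congr' (fun m n => ?_) hQreg
    constructor
    · rintro ⟨hm, hn, hq⟩
      exact ⟨hm, hn, Quotient.sound hq⟩
    · rintro ⟨hm, hn, hq⟩
      exact ⟨hm, hn, Quotient.exact hq⟩
  · set A : ℕ → ℕ → Prop := fun m n => m ∈ L ∧ n ∈ L ∧ Q (φ m) (φ n) with hA
    set B : ℕ → ℕ → Prop := fun m n => m ∈ L ∧ n ∈ L ∧ γ (φ m) (φ n) with hB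
    have hcomp : RegularRel (fun m n => ∃ k, A m k ∧ ∃ k', B k k' ∧ A k' n) :=
      hQreg.comp (hγ.comp hQreg)
    refine RegularRel.congr' (fun m n => ?_) hcomp
    constructor
    · rintro ⟨k, ⟨hm, hk, hq1⟩, k', ⟨_, hk', hg⟩, _, hn, hq2⟩
      refine ⟨hm, hn, φ m, φ n, rfl, rfl, φ k, φ k', hq1, hQ.symm hq2, hg⟩
    · rintro ⟨hm, hn, x, y, hx, hy, x', y', hxx', hyy', hg⟩
      obtain ⟨k, hk, hφk⟩ := hsurj x'
      obtain ⟨k', hk', hφk'⟩ := hsurj y'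
      have hx' : Q x (φ m) := Quotient.exact hx
      have hy' : Q y (φ n) := Quotient.exact hy
      refine ⟨k, ⟨hm, hk, ?_⟩, k', ⟨hk, hk', by rw [hφk, hφk']; exact hg⟩,
        hk', hn, ?_⟩
      · rw [hφk]; exact hQ.trans (hQ.symm hx') hxx'
      · rw [hφk']; exact hQ.trans (hQ.symm hyy') hy'
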